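/- Any function F : {0,1}ⁿ → ℝ that is a pointwise limit of functions each expressible as a sum of at most k products g_i·h_i of nonnegative functions on complementary variable subsets (with each subset of size between n/3 and 2n/3, subsets allowed to vary along the sequence) is itself expressible as a sum of at most k such products of nonnegative functions on complementary subsets of sizes between n/3 and 2n/3. -/

import Mathlib

/-- `F` is expressible as a sum of at most `k` products `g_i·h_i` of nonnegative functions on
complementary coordinate subsets, each subset of size between `n/3` and `2n/3`. -/
def HasGoodDecomp (n k : ℕ) (F : (Fin n → Bool) → ℝ) : Prop :=
  ∃ k' : ℕ, k' ≤ k ∧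
    ∃ (A : Fin k' → Finset (Fin n)) (g h : Fin k' → (Fin n → Bool) → ℝ),
      (∀ i, (n : ℝ) / 3 ≤ ((A i).card : ℝ) ∧ ((A i).card : ℝ) ≤ 2 * (n : ℝ) / 3) ∧
      (∀ i, (n : ℝ) / 3 ≤ (((A i)ᶜ).card : ℝ) ∧ (((A i)ᶜ).card : ℝ) ≤ 2 * (n : ℝ) / 3) ∧
      (∀ i x, 0 ≤ g i x) ∧ (∀ i x, 0 ≤ h i x) ∧
      (∀ i x x', (∀ t ∈ A i, x t = x' t) → g i x = g i x') ∧
      (∀ i x x', (∀ t ∉ A i, x t = x' t) → h i x = h i x') ∧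
      (∀ x, F x = ∑ i : Fin k', g i x * h i x)

/-- A pointwise limit of functions on `{0,1}ⁿ`, each expressible as a sum of at most `k`
products of nonnegative functions on complementary coordinate subsets of sizes between `n/3`
and `2n/3` (the subsets may vary along the sequence), is itself expressible in the same form. -/
theorem stmt_18 {n k : ℕ} (Fseq : ℕ → (Fin n → Bool) → ℝ) (F : (Fin n → Bool) → ℝ)
    (hdecomp : ∀ j, HasGoodDecomp n k (Fseq j))
    (hlim : ∀ x, Filter.Tendsto (fun j => Fseq j x) Filter.atTop (nhds (F x))) :
    HasGoodDecomp n k F := by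
  classical
  choose k' hk' A g h hA hAc hg0 hh0 hgd hhd hsum using hdecomp
  set f : ℕ → Fin (k+1) × (Fin (k+1) → Finset (Fin n)) :=
    fun j => (⟨k' j, Nat.lt_succ_of_le (hk' j)⟩,
      fun i => if hi : (i : ℕ) < k' j then A j ⟨i, hi⟩ else ∅) with hf
  obtain ⟨b, hb⟩ := Finite.exists_infinite_fiber f
  rw [Set.infinite_coe_iff] at hb
  obtain ⟨φ, hφ, hφb⟩ := Filter.extraction_of_frequently_atTop
    ((Nat.frequently_atTop_iff_infinite).mpr hb)
  simp only [Set.mem_preimage, Set.mem_singleton_iff] at hφb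
  set m : ℕ := k' (φ 0) with hm
  -- constancy of k' along the subsequence
  have hkc : ∀ j, k' (φ j) = m := by
    intro j
    have h1 : f (φ j) = f (φ 0) := (hφb j).trans (hφb 0).symm
    have := congrArg (fun p => (p.1 : ℕ)) h1
    simpa [hf] using this
  set Astar : Fin m → Finset (Fin n) := A (φ 0) with hAstar
  -- constancy of A along the subsequence
  have hAC : ∀ j (i : Fin m), A (φ j) (Fin.cast (hkc j).symm i) = Astar i := by
    intro j i
    have h1 : f (φ j) = f (φ 0) := (hφb j).trans (hφb 0).symm
    have h2 := congrArg (fun p => p.2 (Fin.castLE (le_trans (hk' (φ 0)) (Nat.le_succ k)) i)) h1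
    have hi1 : ((Fin.castLE (le_trans (hk' (φ 0)) (Nat.le_succ k)) i : Fin (k+1)) : ℕ) < k' (φ j) := by
      simp [hkc j]
      exact i.isLt
    have hi2 : ((Fin.castLE (le_trans (hk' (φ 0)) (Nat.le_succ k)) i : Fin (k+1)) : ℕ) < k' (φ 0) := by
      simp [← hm]
      exact i.isLt
    simp only [hf, dif_pos hi1, dif_pos hi2] at h2
    convert h2 using 2 <;> apply Fin.ext <;> simp
  -- products along the subsequence
  set p : ℕ → Fin m → (Fin n → Bool) → ℝ :=
    fun j i x => g (φ j) (Fin.cast (hkc j).symm i) x * h (φ j) (Fin.cast (hkc j).symm i) x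
    with hp
  have hp0 : ∀ j i x, 0 ≤ p j i x := fun j i x =>
    mul_nonneg (hg0 (φ j) _ x) (hh0 (φ j) _ x)
  have hpsum : ∀ j x, Fseq (φ j) x = ∑ i : Fin m, p j i x := by
    intro j x
    rw [hsum (φ j) x]
    exact (Fin.sum_congr' (fun i => g (φ j) i x * h (φ j) i x) (hkc j).symm).symm
  -- the subsequence of Fseq converges
  have hGlim : ∀ x, Filter.Tendsto (fun j => Fseq (φ j) x) Filter.atTop (nhds (F x)) :=
    fun x => (hlim x).comp (hφ.tendsto_atTop)
  -- a pointwise bound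
  have hbdd : ∀ x, ∃ C : ℝ, ∀ j, Fseq (φ j) x ≤ C := by
    intro x
    obtain ⟨C, hC⟩ := (hGlim x).bddAbove_range
    exact ⟨C, fun j => hC (Set.mem_range_self j)⟩
  choose C hC using hbdd
  have hpC : ∀ j i x, p j i x ∈ Set.Icc (0:ℝ) (C x) := by
    intro j i x
    refine ⟨hp0 j i x, le_trans ?_ (hC x j)⟩
    rw [hpsum j x]
    exact Finset.single_le_sum (fun i _ => hp0 j i x) (Finset.mem_univ i)
  -- compactness: extract a convergent subsequence of the products
  have hcpt : IsCompact (Set.univ.pi fun ix : Fin m × (Fin n → Bool) => Set.Icc (0:ℝ) (C ix.2)) :=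
    isCompact_univ_pi fun _ => isCompact_Icc
  obtain ⟨L, hL, ψ, hψ, hLlim⟩ := hcpt.tendsto_subseq
    (x := fun j (ix : Fin m × (Fin n → Bool)) => p j ix.1 ix.2)
    (fun j => by intro ix _; exact hpC j ix.1 ix.2)
  have hLlim' : ∀ (i : Fin m) (x : Fin n → Bool),
      Filter.Tendsto (fun j => p (ψ j) i x) Filter.atTop (nhds (L (i, x))) := by
    intro i x
    have := (tendsto_pi_nhds.mp hLlim) (i, x)
    exact this
  set q : Fin m → (Fin n → Bool) → ℝ := fun i x => L (i, x) with hq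
  have hq0 : ∀ i x, 0 ≤ q i x := fun i x =>
    ge_of_tendsto' (hLlim' i x) (fun j => hp0 (ψ j) i x)
  have hqsum : ∀ x, F x = ∑ i : Fin m, q i x := by
    intro x
    have t1 : Filter.Tendsto (fun j => Fseq (φ (ψ j)) x) Filter.atTop (nhds (F x)) :=
      (hGlim x).comp hψ.tendsto_atTop
    have t2 : Filter.Tendsto (fun j => ∑ i : Fin m, p (ψ j) i x) Filter.atTop
        (nhds (∑ i : Fin m, q i x)) :=
      tendsto_finset_sum _ (fun i _ => hLlim' i x)
    have : (fun j => Fseq (φ (ψ j)) x) = fun j => ∑ i : Fin m, p (ψ j) i x := by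
      funext j; exact hpsum (ψ j) x
    rw [this] at t1
    exact tendsto_nhds_unique t1 t2
  -- splices
  set sp : Fin m → (Fin n → Bool) → (Fin n → Bool) → (Fin n → Bool) :=
    fun i x y t => if t ∈ Astar i then x t else y t with hsp
  have hidj : ∀ j i x x', p j i x * p j i x' = p j i (sp i x x') * p j i (sp i x' x) := by
    intro j i x x'
    have hAi : A (φ j) (Fin.cast (hkc j).symm i) = Astar i := hAC j i
    have e1 : ∀ y y', g (φ j) (Fin.cast (hkc j).symm i) (sp i y y')
        = g (φ j) (Fin.cast (hkc j).symm i) y := by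
      intro y y'
      apply hgd
      intro t ht
      rw [hAi] at ht
      simp [hsp, ht]
    have e2 : ∀ y y', h (φ j) (Fin.cast (hkc j).symm i) (sp i y y')
        = h (φ j) (Fin.cast (hkc j).symm i) y' := by
      intro y y'
      apply hhd
      intro t ht
      rw [hAi] at ht
      simp [hsp, ht]
    simp only [hp, e1, e2]
    ring
  have hid : ∀ i x x', q i x * q i x' = q i (sp i x x') * q i (sp i x' x) := by
    intro i x x'
    have t1 : Filter.Tendsto (fun j => p (ψ j) i x * p (ψ j) i x') Filter.atTop
        (nhds (q i x * q i x')) := (hLlim' i x).mul (hLlim' i x')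
    have t2 : Filter.Tendsto (fun j => p (ψ j) i (sp i x x') * p (ψ j) i (sp i x' x))
        Filter.atTop (nhds (q i (sp i x x') * q i (sp i x' x))) :=
      (hLlim' i _).mul (hLlim' i _)
    have : (fun j => p (ψ j) i x * p (ψ j) i x')
        = fun j => p (ψ j) i (sp i x x') * p (ψ j) i (sp i x' x) := by
      funext j; exact hidj (ψ j) i x x'
    rw [this] at t1
    exact tendsto_nhds_unique t1 t2
  -- factor each limit product
  have hfac : ∀ i : Fin m, ∃ G H : (Fin n → Bool) → ℝ,
      (∀ x, 0 ≤ G x) ∧ (∀ x, 0 ≤ H x) ∧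
      (∀ x x', (∀ t ∈ Astar i, x t = x' t) → G x = G x') ∧
      (∀ x x', (∀ t ∉ Astar i, x t = x' t) → H x = H x') ∧
      (∀ x, q i x = G x * H x) := by
    intro i
    by_cases hz : ∀ x, q i x = 0
    · exact ⟨0, 0, fun _ => le_refl 0, fun _ => le_refl 0,
        fun _ _ _ => rfl, fun _ _ _ => rfl, fun x => by simp [hz x]⟩
    · push_neg at hz
      obtain ⟨x0, hx0⟩ := hz
      have hx0' : 0 < q i x0 := lt_of_le_of_ne (hq0 i x0) (Ne.symm hx0)
      refine ⟨fun x => q i (sp i x x0), fun x => q i (sp i x0 x) / q i x0,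
        fun x => hq0 i _, fun x => div_nonneg (hq0 i _) (le_of_lt hx0'), ?_, ?_, ?_⟩
      · intro x x' hxx'
        have : sp i x x0 = sp i x' x0 := by
          funext t
          show (if t ∈ Astar i then x t else x0 t) = (if t ∈ Astar i then x' t else x0 t)
          by_cases ht : t ∈ Astar i
          · simp only [if_pos ht]; exact hxx' t ht
          · simp only [if_neg ht]
        show q i (sp i x x0) = q i (sp i x' x0)
        rw [this]
      · intro x x' hxx'
        have : sp i x0 x = sp i x0 x' := by
          funext t
          show (if t ∈ Astar i then x0 t else x t) = (if t ∈ Astar i then x0 t else x' t)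
          by_cases ht : t ∈ Astar i
          · simp only [if_pos ht]
          · simp only [if_neg ht]; exact hxx' t ht
        show q i (sp i x0 x) / q i x0 = q i (sp i x0 x') / q i x0
        rw [this]
      · intro x
        have := hid i x x0
        field_simp
        linarith [this]
  choose G H hG0 hH0 hGdep hHdep hprod using hfac
  refine ⟨m, hk' (φ 0), Astar, G, H, fun i => hA (φ 0) i, fun i => hAc (φ 0) i,
    hG0, hH0, hGdep, hHdep, fun x => ?_⟩
  rw [hqsum x]
  exact Finset.sum_congr rfl (fun i _ => hprod i x)
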